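/- Fix 1 ≤ d ≤ n−1 and let H′ be the subgroup of GL_n(ℝ) consisting of block matrices [[γ, v],[0, δ]] with γ ∈ GL_d(ℤ), v ∈ ℝ^{d×(n−d)}, δ ∈ GL_{n−d}(ℤ). Define f′ : GL_n(ℝ) → GL_n(ℝ) by f′(g) = [B | D], where B is the matrix of the first d columns of g and D is the matrix of the last n−d columns of (gᵀ)⁻¹. Then f′(g) ∈ GL_n(ℝ) for every g ∈ GL_n(ℝ), f′(gh)·H′ = f′(g)·H′ for every g ∈ GL_n(ℝ) and h ∈ H′, and f′(f′(g)) ∈ g·H′; consequently f′ induces a well-defined involutive bijection of the coset space GL_n(ℝ)/H′ (which, under the identification of GL_n(ℝ)/H′ with the space of pairs (Λ, L) of a d-lattice Λ and an (n−d)-lattice L in V_Λ^⊥, is the map (Λ, L) ↦ (Λ, L*)). -/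

import Mathlib

open Matrix

noncomputable section

/-- The set of all integer linear combinations of the columns of `B`
(the `ℤ`-span of the columns of `B`). -/
def zspan {n d : ℕ} (B : Matrix (Fin n) (Fin d) ℝ) : Set (Fin n → ℝ) :=
  Set.range fun c : Fin d → ℤ => B.mulVec fun j => (c j : ℝ)

/-- `B` is a `ℤ`-basis matrix for `Λ`: its columns are `ℝ`-linearly independent
and their `ℤ`-span is `Λ`. -/
def IsLatticeBasis {n d : ℕ} (B : Matrix (Fin n) (Fin d) ℝ) (Λ : Set (Fin n → ℝ)) : Prop :=
  LinearIndependent ℝ (fun j : Fin d => fun i : Fin n => B i j) ∧ Λ = zspan B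

/-- `Λ` is a `d`-lattice in `ℝⁿ`: it is generated over `ℤ` by `d`
linearly independent vectors. -/
def IsDLattice {n : ℕ} (d : ℕ) (Λ : Set (Fin n → ℝ)) : Prop :=
  ∃ B : Matrix (Fin n) (Fin d) ℝ, IsLatticeBasis B Λ

/-- `ℤⁿ` viewed as a subset of `ℝⁿ`. -/
def intLattice (n : ℕ) : Set (Fin n → ℝ) :=
  Set.range fun c : Fin n → ℤ => fun i => (c i : ℝ)

/-- `Λ` is primitive inside `Δ` : `Λ = Δ ∩ span_ℝ Λ`. -/
def IsPrimitiveIn {n : ℕ} (Λ Δ : Set (Fin n → ℝ)) : Prop :=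
  Λ = Δ ∩ (Submodule.span ℝ Λ : Set (Fin n → ℝ))

/-- The dual lattice `Λ* = {y ∈ V_Λ : ⟨x,y⟩ ∈ ℤ for all x ∈ Λ}`. -/
def dualLattice {n : ℕ} (Λ : Set (Fin n → ℝ)) : Set (Fin n → ℝ) :=
  {y | y ∈ Submodule.span ℝ Λ ∧ ∀ x ∈ Λ, ∃ m : ℤ, x ⬝ᵥ y = (m : ℝ)}

/-- Orthogonal complement with respect to the standard inner product on `ℝⁿ`. -/
def perp {n : ℕ} (V : Submodule ℝ (Fin n → ℝ)) : Submodule ℝ (Fin n → ℝ) where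
  carrier := {y | ∀ x ∈ V, x ⬝ᵥ y = 0}
  add_mem' := by
    intro a b ha hb x hx
    simp [dotProduct_add, ha x hx, hb x hx]
  zero_mem' := by
    intro x hx
    simp
  smul_mem' := by
    intro c a ha x hx
    simp [dotProduct_smul, ha x hx]

/-- The `n × d` matrix of the first `d` columns of `g`. -/
def firstColsR {n d : ℕ} (h : d ≤ n) (g : Matrix (Fin n) (Fin n) ℝ) :
    Matrix (Fin n) (Fin d) ℝ :=
  Matrix.of fun i j => g i (Fin.castLE h j)

/-- The `n × (n-d)` matrix of the last `n - d` columns of `g`. -/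
def lastColsR {n d : ℕ} (h : d ≤ n) (g : Matrix (Fin n) (Fin n) ℝ) :
    Matrix (Fin n) (Fin (n - d)) ℝ :=
  Matrix.of fun i (j : Fin (n - d)) => g i ⟨d + (j : ℕ), by have := j.isLt; omega⟩

/-- The map `f' : g ↦ [B | D]` keeping the first `d` columns of `g` and
replacing the last `n - d` columns by those of `(gᵀ)⁻¹`. -/
def dualizePair {n : ℕ} (d : ℕ) (g : Matrix (Fin n) (Fin n) ℝ) :
    Matrix (Fin n) (Fin n) ℝ :=
  Matrix.of fun i j => if (j : ℕ) < d then g i j else (gᵀ)⁻¹ i j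

/-- Membership in the subgroup `H'` of block matrices `[[γ, v], [0, δ]]` with
`γ ∈ GL_d(ℤ)`, `v ∈ ℝ^{d × (n-d)}`, `δ ∈ GL_{n-d}(ℤ)`. -/
def memH' {n : ℕ} (d : ℕ) (h : Matrix (Fin n) (Fin n) ℝ) : Prop :=
  ∃ (hle : d ≤ n) (γ : Matrix (Fin d) (Fin d) ℤ)
    (v : Matrix (Fin d) (Fin (n - d)) ℝ)
    (δ : Matrix (Fin (n - d)) (Fin (n - d)) ℤ),
    IsUnit γ.det ∧ IsUnit δ.det ∧
    h = Matrix.reindex (finSumFinEquiv.trans (finCongr (by omega)))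
          (finSumFinEquiv.trans (finCongr (by omega)))
          (Matrix.fromBlocks (γ.map fun a => (a : ℝ)) v 0
            (δ.map fun a => (a : ℝ)))

namespace Stmt15Aux

open Matrix

/-! ### Index equivalence -/

def eS (n d : ℕ) (h : d + (n - d) = n) : Fin d ⊕ Fin (n - d) ≃ Fin n :=
  finSumFinEquiv.trans (finCongr h)

lemma coe_eS_inl {n d : ℕ} (h : d + (n - d) = n) (j : Fin d) :
    ((eS n d h (Sum.inl j) : Fin n) : ℕ) = (j : ℕ) := by
  simp [eS]

lemma coe_eS_inr {n d : ℕ} (h : d + (n - d) = n) (k : Fin (n - d)) :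
    ((eS n d h (Sum.inr k) : Fin n) : ℕ) = d + (k : ℕ) := by
  simp [eS]

lemma reindex_mul {α β : Type*} [Fintype α] [Fintype β] [DecidableEq α] [DecidableEq β]
    (e : α ≃ β) (A B : Matrix α α ℝ) :
    reindex e e (A * B) = reindex e e A * reindex e e B := by
  simp only [reindex_apply]
  exact (submatrix_mul_equiv A B _ e.symm _).symm

lemma reindex_cancel {α β : Type*} [Fintype α] [Fintype β] [DecidableEq α] [DecidableEq β]
    (e : α ≃ β) (M : Matrix α α ℝ) :
    reindex e.symm e.symm (reindex e e M) = M := by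
  rw [← reindex_symm]
  exact Equiv.symm_apply_apply _ _

lemma reindex_cancel' {α β : Type*} [Fintype α] [Fintype β] [DecidableEq α] [DecidableEq β]
    (e : α ≃ β) (M : Matrix β β ℝ) :
    reindex e e (reindex e.symm e.symm M) = M := by
  rw [← reindex_symm]
  exact Equiv.apply_symm_apply _ _

/-! ### Dot product / span helpers -/

lemma dot_zero_of_mem_span {n : ℕ} {V : Set (Fin n → ℝ)} {y : Fin n → ℝ}
    (h : ∀ v ∈ V, v ⬝ᵥ y = 0) {x : Fin n → ℝ} (hx : x ∈ Submodule.span ℝ V) :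
    x ⬝ᵥ y = 0 := by
  induction hx using Submodule.span_induction with
  | mem v hv => exact h v hv
  | zero => simp
  | add a b _ _ ha hb => rw [add_dotProduct, ha, hb, add_zero]
  | smul c a _ ha => rw [smul_dotProduct, ha, smul_zero]

lemma mulVec_eq_sum_cols {n m : ℕ} (M : Matrix (Fin n) (Fin m) ℝ) (c : Fin m → ℝ) :
    M *ᵥ c = ∑ k : Fin m, c k • (fun i => M i k) := by
  funext i
  simp [Matrix.mulVec, dotProduct, Finset.sum_apply, mul_comm]

lemma col_mem_zspan {n m : ℕ} (M : Matrix (Fin n) (Fin m) ℝ) (k : Fin m) :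
    (fun i => M i k) ∈ zspan M := by
  refine ⟨Pi.single k 1, ?_⟩
  funext i
  simp [Matrix.mulVec, dotProduct, Pi.single_apply]

lemma sum_smul_dotProduct {n m : ℕ} (a : Fin m → ℝ) (P : Fin m → Fin n → ℝ) (y : Fin n → ℝ) :
    (∑ j, a j • P j) ⬝ᵥ y = ∑ j, a j * (P j ⬝ᵥ y) := by
  simp only [dotProduct, Finset.sum_apply, Pi.smul_apply, smul_eq_mul, Finset.sum_mul,
    Finset.mul_sum]
  rw [Finset.sum_comm]
  refine Finset.sum_congr rfl fun j _ => Finset.sum_congr rfl fun i _ => by ring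

lemma dotProduct_sum_smul {n m : ℕ} (x : Fin n → ℝ) (c : Fin m → ℝ) (D : Fin m → Fin n → ℝ) :
    x ⬝ᵥ (∑ k, c k • D k) = ∑ k, c k * (x ⬝ᵥ D k) := by
  simp only [dotProduct, Finset.sum_apply, Pi.smul_apply, smul_eq_mul, Finset.mul_sum]
  rw [Finset.sum_comm]
  refine Finset.sum_congr rfl fun j _ => Finset.sum_congr rfl fun i _ => by ring

/-! ### The bridge between `dualizePair` and block matrices -/

lemma bridge {n d : ℕ} (h : d + (n - d) = n) (g : Matrix (Fin n) (Fin n) ℝ) :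
    dualizePair d g = reindex (eS n d h) (eS n d h)
      (fromCols
        (toCols₁ (reindex (eS n d h).symm (eS n d h).symm g))
        (toCols₂ (((reindex (eS n d h).symm (eS n d h).symm g)ᵀ)⁻¹))) := by
  have h1 : ((reindex (eS n d h).symm (eS n d h).symm g)ᵀ)⁻¹
      = reindex (eS n d h).symm (eS n d h).symm ((gᵀ)⁻¹) := by
    rw [transpose_reindex, inv_reindex]
  rw [h1]
  ext i j
  obtain ⟨p, rfl⟩ : ∃ p, j = eS n d h p := ⟨(eS n d h).symm j, (Equiv.apply_symm_apply _ _).symm⟩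
  rcases p with j' | k'
  · have hlt : ((eS n d h (Sum.inl j') : Fin n) : ℕ) < d := by
      rw [coe_eS_inl]; exact j'.isLt
    simp [dualizePair, reindex_apply, submatrix_apply, hlt]
  · have hlt : ¬ ((eS n d h (Sum.inr k') : Fin n) : ℕ) < d := by
      rw [coe_eS_inr]; omega
    simp [dualizePair, reindex_apply, submatrix_apply, hlt]

/-! ### Block matrix computations -/

lemma gram_key {d m : ℕ} (G : Matrix (Fin d ⊕ Fin m) (Fin d ⊕ Fin m) ℝ) (hG : IsUnit G.det) :
    Gᵀ * fromCols (toCols₁ G) (toCols₂ ((Gᵀ)⁻¹))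
      = fromBlocks ((toCols₁ G)ᵀ * toCols₁ G) 0 ((toCols₂ G)ᵀ * toCols₁ G) 1 := by
  have hGt : IsUnit (Gᵀ).det := by rwa [det_transpose]
  have hG2 : Gᵀ = fromRows (toCols₁ G)ᵀ (toCols₂ G)ᵀ := by
    conv_lhs => rw [← fromCols_toCols G]
    rw [transpose_fromCols]
  have h2 : (Gᵀ)⁻¹ = fromCols (toCols₁ ((Gᵀ)⁻¹)) (toCols₂ ((Gᵀ)⁻¹)) :=
    (fromCols_toCols _).symm
  have h1 : fromBlocks ((toCols₁ G)ᵀ * toCols₁ ((Gᵀ)⁻¹))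
      ((toCols₁ G)ᵀ * toCols₂ ((Gᵀ)⁻¹))
      ((toCols₂ G)ᵀ * toCols₁ ((Gᵀ)⁻¹))
      ((toCols₂ G)ᵀ * toCols₂ ((Gᵀ)⁻¹)) = fromBlocks 1 0 0 1 := by
    rw [← fromRows_mul_fromCols, ← hG2, ← h2, mul_nonsing_inv _ hGt, fromBlocks_one]
  have e12 : (toCols₁ G)ᵀ * toCols₂ ((Gᵀ)⁻¹) = 0 := by
    have h := congrArg toBlocks₁₂ h1
    simp only [toBlocks_fromBlocks₁₂] at h
    exact h
  have e22 : (toCols₂ G)ᵀ * toCols₂ ((Gᵀ)⁻¹) = 1 := by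
    have h := congrArg toBlocks₂₂ h1
    simp only [toBlocks_fromBlocks₂₂] at h
    exact h
  nth_rewrite 1 [hG2]
  rw [fromRows_mul_fromCols, e12, e22]

lemma gram_isUnit {d m : ℕ} (G : Matrix (Fin d ⊕ Fin m) (Fin d ⊕ Fin m) ℝ)
    (hG : IsUnit G.det) :
    IsUnit ((toCols₁ G)ᵀ * toCols₁ G).det := by
  rw [isUnit_iff_ne_zero]
  intro h0
  obtain ⟨v, hv, hv0⟩ := Matrix.exists_mulVec_eq_zero_iff.mpr h0
  have hw : (toCols₁ G *ᵥ v) ⬝ᵥ (toCols₁ G *ᵥ v) = 0 := by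
    rw [dotProduct_mulVec, ← mulVec_transpose, mulVec_mulVec, hv0, zero_dotProduct]
  have hBv : toCols₁ G *ᵥ v = 0 := dotProduct_self_eq_zero.mp hw
  have hGv : G *ᵥ Sum.elim v 0 = 0 := by
    conv_lhs => rw [← fromCols_toCols G]
    rw [fromCols_mulVec_sumElim, hBv, mulVec_zero, add_zero]
  have hz : Sum.elim v (0 : Fin m → ℝ) = 0 := by
    have h2 := congrArg (fun y => G⁻¹ *ᵥ y) hGv
    simpa [mulVec_mulVec, nonsing_inv_mul _ hG, one_mulVec] using h2
  exact hv (funext fun a => congrFun hz (Sum.inl a))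

lemma dp_mul_core {d m : ℕ} (G : Matrix (Fin d ⊕ Fin m) (Fin d ⊕ Fin m) ℝ)
    (A Ai : Matrix (Fin d) (Fin d) ℝ) (Δ Δi : Matrix (Fin m) (Fin m) ℝ)
    (v : Matrix (Fin d) (Fin m) ℝ)
    (hA' : Ai * A = 1) (hΔ' : Δi * Δ = 1) :
    fromCols (toCols₁ (G * fromBlocks A v 0 Δ))
        (toCols₂ (((G * fromBlocks A v 0 Δ)ᵀ)⁻¹))
      = fromCols (toCols₁ G) (toCols₂ ((Gᵀ)⁻¹)) * fromBlocks A 0 0 Δiᵀ := by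
  have h11 : Aᵀ * Aiᵀ = 1 := by rw [← transpose_mul, hA', transpose_one]
  have h22 : Δᵀ * Δiᵀ = 1 := by rw [← transpose_mul, hΔ', transpose_one]
  have hH : (fromBlocks A v 0 Δ)ᵀ * fromBlocks Aiᵀ 0 (-(Δiᵀ * (vᵀ * Aiᵀ))) Δiᵀ = 1 := by
    rw [fromBlocks_transpose, transpose_zero, fromBlocks_multiply]
    have hblk : vᵀ * Aiᵀ + Δᵀ * -(Δiᵀ * (vᵀ * Aiᵀ)) = 0 := by
      rw [Matrix.mul_neg, ← Matrix.mul_assoc, h22, Matrix.one_mul, add_neg_cancel]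
    simp only [Matrix.mul_zero, Matrix.zero_mul, add_zero, zero_add, h11, h22, hblk]
    exact fromBlocks_one
  have hHinv : ((fromBlocks A v 0 Δ)ᵀ)⁻¹
      = fromBlocks Aiᵀ 0 (-(Δiᵀ * (vᵀ * Aiᵀ))) Δiᵀ := inv_eq_right_inv hH
  have hcol1 : toCols₁ (G * fromBlocks A v 0 Δ) = toCols₁ G * A := by
    conv_lhs => rw [← fromCols_toCols G, fromCols_mul_fromBlocks]
    simp
  have hcol2 : toCols₂ (((G * fromBlocks A v 0 Δ)ᵀ)⁻¹) = toCols₂ ((Gᵀ)⁻¹) * Δiᵀ := by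
    rw [transpose_mul, Matrix.mul_inv_rev, hHinv]
    conv_lhs => rw [← fromCols_toCols ((Gᵀ)⁻¹), fromCols_mul_fromBlocks]
    simp
  rw [hcol1, hcol2, fromCols_mul_fromBlocks]
  simp

lemma dp_dp_core {d m : ℕ} (G : Matrix (Fin d ⊕ Fin m) (Fin d ⊕ Fin m) ℝ)
    (hG : IsUnit G.det) :
    fromCols (toCols₁ (fromCols (toCols₁ G) (toCols₂ ((Gᵀ)⁻¹))))
        (toCols₂ (((fromCols (toCols₁ G) (toCols₂ ((Gᵀ)⁻¹)))ᵀ)⁻¹))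
      = G * fromBlocks 1
          (-(((toCols₁ G)ᵀ * toCols₁ G)⁻¹ * ((toCols₁ G)ᵀ * toCols₂ G))) 0 1 := by
  set B := toCols₁ G with hB
  set C := toCols₂ G with hC
  set D := toCols₂ ((Gᵀ)⁻¹) with hD
  set P := Bᵀ * B with hP
  set W := -(P⁻¹ * (Bᵀ * C)) with hW
  have hGt : IsUnit (Gᵀ).det := by rwa [det_transpose]
  have hPu : IsUnit P.det := gram_isUnit G hG
  have hkey : Gᵀ * fromCols B D = fromBlocks P 0 (Cᵀ * B) 1 := gram_key G hG
  have hF : fromCols B D = (Gᵀ)⁻¹ *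
      fromBlocks P (0 : Matrix (Fin d) (Fin m) ℝ) (Cᵀ * B) (1 : Matrix (Fin m) (Fin m) ℝ) := by
    rw [← hkey, nonsing_inv_mul_cancel_left _ _ hGt]
  have hPt : Pᵀ = P := by rw [hP, transpose_mul, transpose_transpose]
  have hFt : (fromCols B D)ᵀ =
      fromBlocks P (Bᵀ * C) (0 : Matrix (Fin m) (Fin d) ℝ) (1 : Matrix (Fin m) (Fin m) ℝ)
        * G⁻¹ := by
    rw [hF, transpose_mul, transpose_nonsing_inv, transpose_transpose, fromBlocks_transpose,
      transpose_zero, transpose_one, hPt, transpose_mul, transpose_transpose]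
  have hPP : P * P⁻¹ = 1 := mul_nonsing_inv _ hPu
  have hKinv : (fromBlocks P (Bᵀ * C) (0 : Matrix (Fin m) (Fin d) ℝ)
        (1 : Matrix (Fin m) (Fin m) ℝ))⁻¹ = fromBlocks P⁻¹ W 0 1 := by
    apply inv_eq_right_inv
    rw [fromBlocks_multiply]
    have h12 : P * W + Bᵀ * C = 0 := by
      rw [hW, Matrix.mul_neg, ← Matrix.mul_assoc, hPP, Matrix.one_mul, neg_add_cancel]
    simp only [Matrix.mul_zero, Matrix.zero_mul, add_zero, zero_add, Matrix.one_mul,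
      Matrix.mul_one, hPP, h12]
    exact fromBlocks_one
  have hFinv : ((fromCols B D)ᵀ)⁻¹ = G * fromBlocks P⁻¹ W 0 1 := by
    rw [hFt, Matrix.mul_inv_rev, nonsing_inv_nonsing_inv _ hG, hKinv]
  rw [hFinv]
  rw [show G = fromCols B C from (fromCols_toCols G).symm]
  rw [fromCols_mul_fromBlocks, fromCols_mul_fromBlocks, toCols₁_fromCols,
    toCols₂_fromCols]
  simp

/-! ### Integer matrices -/

lemma map_mul_one {k : ℕ} (M N : Matrix (Fin k) (Fin k) ℤ) (hMN : M * N = 1) :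
    (M.map fun a => (a : ℝ)) * (N.map fun a => (a : ℝ)) = 1 := by
  have h1 : (M.map fun a => (a : ℝ)) * (N.map fun a => (a : ℝ))
      = (M * N).map fun a => (a : ℝ) :=
    (Matrix.map_mul (f := Int.castRingHom ℝ)).symm
  rw [h1, hMN]
  exact Matrix.map_one _ (by simp) (by simp)

/-! ### memH' construction -/

lemma memH'_intro {n d : ℕ} (hmn : d + (n - d) = n)
    (γ : Matrix (Fin d) (Fin d) ℤ) (v : Matrix (Fin d) (Fin (n - d)) ℝ)
    (δ : Matrix (Fin (n - d)) (Fin (n - d)) ℤ)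
    (hγ : IsUnit γ.det) (hδ : IsUnit δ.det) :
    memH' d (reindex (eS n d hmn) (eS n d hmn)
      (fromBlocks (γ.map fun a => (a : ℝ)) v 0 (δ.map fun a => (a : ℝ)))) := by
  exact ⟨by omega, γ, v, δ, hγ, hδ, rfl⟩

/-! ### Column decomposition -/

lemma decomp {n d : ℕ} (hmn : d + (n - d) = n)
    (M : Matrix (Fin n) (Fin n) ℝ) (hM : IsUnit M.det) (x : Fin n → ℝ) :
    x = (∑ j : Fin d, (M⁻¹ *ᵥ x) (eS n d hmn (Sum.inl j)) •
          fun i => M i (eS n d hmn (Sum.inl j)))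
      + ∑ k : Fin (n - d), (M⁻¹ *ᵥ x) (eS n d hmn (Sum.inr k)) •
          fun i => M i (eS n d hmn (Sum.inr k)) := by
  have h1 : M *ᵥ (M⁻¹ *ᵥ x) = x := by
    rw [mulVec_mulVec, mul_nonsing_inv _ hM, one_mulVec]
  conv_lhs => rw [← h1, mulVec_eq_sum_cols]
  rw [← Equiv.sum_comp (eS n d hmn)
    (fun a => (M⁻¹ *ᵥ x) a • fun i => M i a), Fintype.sum_sum_type]

/-! ### Cols of a matrix, in the split indexing -/

def colB {n d : ℕ} (hmn : d + (n - d) = n) (g : Matrix (Fin n) (Fin n) ℝ) :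
    Fin d → Fin n → ℝ :=
  fun j i => g i (eS n d hmn (Sum.inl j))

def colC {n d : ℕ} (hmn : d + (n - d) = n) (g : Matrix (Fin n) (Fin n) ℝ) :
    Fin (n - d) → Fin n → ℝ :=
  fun k i => g i (eS n d hmn (Sum.inr k))

def colD {n d : ℕ} (hmn : d + (n - d) = n) (g : Matrix (Fin n) (Fin n) ℝ) :
    Fin (n - d) → Fin n → ℝ :=
  fun k i => (gᵀ)⁻¹ i (eS n d hmn (Sum.inr k))

lemma decomp' {n d : ℕ} (hmn : d + (n - d) = n)
    (M : Matrix (Fin n) (Fin n) ℝ) (hM : IsUnit M.det) (x : Fin n → ℝ) :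
    x = (∑ j : Fin d, (M⁻¹ *ᵥ x) (eS n d hmn (Sum.inl j)) • colB hmn M j)
      + ∑ k : Fin (n - d), (M⁻¹ *ᵥ x) (eS n d hmn (Sum.inr k)) • colC hmn M k :=
  decomp hmn M hM x

/-- Part 4, phrased with the split columns. -/
theorem part4 {n d : ℕ} (hmn : d + (n - d) = n)
    (g : Matrix (Fin n) (Fin n) ℝ) (hg : IsUnit g.det)
    (π : (Fin n → ℝ) →ₗ[ℝ] (Fin n → ℝ))
    (hperp : ∀ x : Fin n → ℝ,
      ∀ u ∈ Submodule.span ℝ (Set.range (colB hmn g)), u ⬝ᵥ π x = 0)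
    (hsub : ∀ x : Fin n → ℝ, x - π x ∈ Submodule.span ℝ (Set.range (colB hmn g))) :
    zspan (Matrix.of fun i k => colD hmn g k i)
      = dualLattice (zspan (Matrix.of fun (i : Fin n) (k : Fin (n - d)) =>
          π (colC hmn g k) i)) := by
  have hgt : IsUnit (gᵀ).det := by rwa [det_transpose]
  have hone : gᵀ * (gᵀ)⁻¹ = 1 := mul_nonsing_inv _ hgt
  have hdot : ∀ a b : Fin n, (fun i => g i a) ⬝ᵥ (fun i => (gᵀ)⁻¹ i b)
      = (1 : Matrix (Fin n) (Fin n) ℝ) a b := by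
    intro a b
    have h : (gᵀ * (gᵀ)⁻¹) a b = (1 : Matrix (Fin n) (Fin n) ℝ) a b := by rw [hone]
    simpa [Matrix.mul_apply, dotProduct] using h
  have hBD : ∀ (j : Fin d) (k : Fin (n - d)), colB hmn g j ⬝ᵥ colD hmn g k = 0 := by
    intro j k
    have h := hdot (eS n d hmn (Sum.inl j)) (eS n d hmn (Sum.inr k))
    rwa [one_apply_ne ((eS n d hmn).injective.ne (by simp))] at h
  have hCD : ∀ (k l : Fin (n - d)),
      colC hmn g k ⬝ᵥ colD hmn g l = if k = l then 1 else 0 := by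
    intro k l
    have h := hdot (eS n d hmn (Sum.inr k)) (eS n d hmn (Sum.inr l))
    by_cases hkl : k = l
    · subst hkl
      rw [if_pos rfl]
      rwa [one_apply_eq] at h
    · rw [if_neg hkl]
      rwa [one_apply_ne ((eS n d hmn).injective.ne (by simpa using hkl))] at h
  have hspanD : ∀ x ∈ Submodule.span ℝ (Set.range (colB hmn g)),
      ∀ k, x ⬝ᵥ colD hmn g k = 0 := by
    intro x hx k
    refine dot_zero_of_mem_span ?_ hx
    rintro v ⟨j, rfl⟩
    exact hBD j k
  have hPD : ∀ (j k : Fin (n - d)),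
      π (colC hmn g j) ⬝ᵥ colD hmn g k = if j = k then 1 else 0 := by
    intro j k
    have h1 : π (colC hmn g j)
        = colC hmn g j - (colC hmn g j - π (colC hmn g j)) := (sub_sub_cancel _ _).symm
    rw [h1, sub_dotProduct, hspanD _ (hsub (colC hmn g j)) k, sub_zero, hCD]
  have hmulD : ∀ cr : Fin (n - d) → ℝ,
      (Matrix.of fun i k => colD hmn g k i) *ᵥ cr = ∑ k, cr k • colD hmn g k :=
    fun cr => mulVec_eq_sum_cols _ _
  have hmulP : ∀ cr : Fin (n - d) → ℝ,
      (Matrix.of fun (i : Fin n) k => π (colC hmn g k) i) *ᵥ cr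
        = ∑ k, cr k • π (colC hmn g k) :=
    fun cr => mulVec_eq_sum_cols _ _
  have hPmem : ∀ k, π (colC hmn g k)
      ∈ zspan (Matrix.of fun (i : Fin n) k => π (colC hmn g k) i) :=
    fun k => col_mem_zspan _ k
  have hDspanP : ∀ k, colD hmn g k
      ∈ Submodule.span ℝ (Set.range fun k => π (colC hmn g k)) := by
    intro k
    have hdec := decomp' hmn g hg (colD hmn g k)
    set c : Fin (n - d) → ℝ :=
      fun k' => (g⁻¹ *ᵥ colD hmn g k) (eS n d hmn (Sum.inr k')) with hc
    have hdec2 : colD hmn g k - ∑ k', c k' • π (colC hmn g k')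
        = (∑ j : Fin d, (g⁻¹ *ᵥ colD hmn g k) (eS n d hmn (Sum.inl j)) • colB hmn g j)
          + ∑ k', c k' • (colC hmn g k' - π (colC hmn g k')) := by
      conv_lhs => rw [hdec]
      rw [add_sub_assoc]
      congr 1
      rw [← Finset.sum_sub_distrib]
      refine Finset.sum_congr rfl fun k' _ => ?_
      rw [← smul_sub]
    have humem : colD hmn g k - ∑ k', c k' • π (colC hmn g k')
        ∈ Submodule.span ℝ (Set.range (colB hmn g)) := by
      rw [hdec2]
      refine Submodule.add_mem _ ?_ ?_
      · exact Submodule.sum_mem _ fun j _ =>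
          Submodule.smul_mem _ _ (Submodule.subset_span ⟨j, rfl⟩)
      · exact Submodule.sum_mem _ fun k' _ =>
          Submodule.smul_mem _ _ (hsub (colC hmn g k'))
    have hzero : colD hmn g k - ∑ k', c k' • π (colC hmn g k') = 0 := by
      refine dotProduct_self_eq_zero.mp ?_
      have hv : ∀ x ∈ Submodule.span ℝ (Set.range (colB hmn g)),
          x ⬝ᵥ (colD hmn g k - ∑ k', c k' • π (colC hmn g k')) = 0 := by
        intro x hx
        rw [dotProduct_sub, hspanD x hx k, dotProduct_sum_smul, zero_sub, neg_eq_zero]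
        refine Finset.sum_eq_zero fun k' _ => ?_
        rw [hperp (colC hmn g k') x hx, mul_zero]
      exact hv _ humem
    have hDeq : colD hmn g k = ∑ k', c k' • π (colC hmn g k') := sub_eq_zero.mp hzero
    rw [hDeq]
    exact Submodule.sum_mem _ fun k' _ =>
      Submodule.smul_mem _ _ (Submodule.subset_span ⟨k', rfl⟩)
  have hker : ∀ w ∈ Submodule.span ℝ (Set.range fun k => π (colC hmn g k)),
      (∀ j, π (colC hmn g j) ⬝ᵥ w = 0) → w = 0 := by
    intro w hw hj
    refine dotProduct_self_eq_zero.mp ?_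
    refine dot_zero_of_mem_span ?_ hw
    rintro v ⟨j, rfl⟩
    exact hj j
  ext y
  constructor
  · rintro ⟨cz, rfl⟩
    dsimp only
    refine ⟨?_, ?_⟩
    · rw [hmulD]
      refine Submodule.sum_mem _ fun k _ => Submodule.smul_mem _ _ ?_
      have h1 : Submodule.span ℝ (Set.range fun k => π (colC hmn g k))
          ≤ Submodule.span ℝ
            (zspan (Matrix.of fun (i : Fin n) k => π (colC hmn g k) i)) := by
        refine Submodule.span_mono ?_
        rintro v ⟨k', rfl⟩
        exact hPmem k'
      exact h1 (hDspanP k)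
    · rintro x ⟨a, rfl⟩
      dsimp only
      refine ⟨∑ j, a j * cz j, ?_⟩
      rw [hmulP, hmulD, sum_smul_dotProduct]
      push_cast
      refine Finset.sum_congr rfl fun j _ => ?_
      rw [dotProduct_sum_smul]
      simp [hPD, mul_ite, Finset.sum_ite_eq]
  · rintro ⟨hy1, hy2⟩
    have hysub : y ∈ Submodule.span ℝ (Set.range fun k => π (colC hmn g k)) := by
      have h1 : zspan (Matrix.of fun (i : Fin n) k => π (colC hmn g k) i)
          ⊆ (Submodule.span ℝ (Set.range fun k => π (colC hmn g k))
              : Set (Fin n → ℝ)) := by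
        rintro x ⟨a, rfl⟩
        dsimp only
        rw [hmulP]
        exact Submodule.sum_mem _ fun k _ =>
          Submodule.smul_mem _ _ (Submodule.subset_span ⟨k, rfl⟩)
      exact Submodule.span_le.mpr h1 hy1
    choose mz hmz using fun j => hy2 _ (hPmem j)
    refine ⟨mz, ?_⟩
    dsimp only
    rw [hmulD]
    have hzmem : (∑ k, ((mz k : ℝ)) • colD hmn g k)
        ∈ Submodule.span ℝ (Set.range fun k => π (colC hmn g k)) :=
      Submodule.sum_mem _ fun k _ => Submodule.smul_mem _ _ (hDspanP k)
    have hw0 : y - ∑ k, ((mz k : ℝ)) • colD hmn g k = 0 := by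
      refine hker _ (Submodule.sub_mem _ hysub hzmem) ?_
      intro j
      rw [dotProduct_sub, hmz j, dotProduct_sum_smul]
      simp [hPD, mul_ite, Finset.sum_ite_eq]
    exact (sub_eq_zero.mp hw0).symm

end Stmt15Aux

open Stmt15Aux

/-- `f'(g) = [B | D]` (with `D` the last `n-d` columns of
`(gᵀ)⁻¹`) maps `GL_n(ℝ)` to itself, descends to the coset space
`GL_n(ℝ)/H'`, is an involution modulo `H'`, and on the level of pairs of
lattices it is the map `(Λ, L) ↦ (Λ, L*)`. -/
theorem stmt15 (n d : ℕ) (hd : 1 ≤ d) (hdn : d ≤ n - 1) (hn : 2 ≤ n) :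
    (∀ g : Matrix (Fin n) (Fin n) ℝ, IsUnit g.det →
      IsUnit (dualizePair d g).det) ∧
    (∀ g h : Matrix (Fin n) (Fin n) ℝ, IsUnit g.det → memH' d h →
      ∃ h' : Matrix (Fin n) (Fin n) ℝ, memH' d h' ∧
        dualizePair d (g * h) = dualizePair d g * h') ∧
    (∀ g : Matrix (Fin n) (Fin n) ℝ, IsUnit g.det →
      ∃ h : Matrix (Fin n) (Fin n) ℝ, memH' d h ∧
        dualizePair d (dualizePair d g) = g * h) ∧
    (∀ g : Matrix (Fin n) (Fin n) ℝ, IsUnit g.det →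
      ∀ π : (Fin n → ℝ) →ₗ[ℝ] (Fin n → ℝ),
        (∀ x : Fin n → ℝ,
          π x ∈ perp (Submodule.span ℝ (Set.range fun j : Fin d =>
            fun i : Fin n => firstColsR (show d ≤ n by omega) g i j)) ∧
          x - π x ∈ Submodule.span ℝ (Set.range fun j : Fin d =>
            fun i : Fin n => firstColsR (show d ≤ n by omega) g i j)) →
        zspan (lastColsR (show d ≤ n by omega) (dualizePair d g)) =
          dualLattice (zspan (Matrix.of fun (i : Fin n) (j : Fin (n - d)) =>
            π (fun k : Fin n => lastColsR (show d ≤ n by omega) g k j) i))) := by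
  
  have hmn : d + (n - d) = n := by omega
  refine ⟨?_, ?_, ?_, ?_⟩
  -- Part 1: f' maps GL_n(ℝ) to itself.
  · intro g hg
    have hG : IsUnit (reindex (eS n d hmn).symm (eS n d hmn).symm g).det := by
      rwa [det_reindex_self]
    rw [bridge hmn g, det_reindex_self]
    have hkey := gram_key (reindex (eS n d hmn).symm (eS n d hmn).symm g) hG
    have hdet := congrArg Matrix.det hkey
    rw [det_mul, det_fromBlocks_zero₁₂, det_one, mul_one] at hdet
    have hPu := gram_isUnit (reindex (eS n d hmn).symm (eS n d hmn).symm g) hG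
    rw [← hdet] at hPu
    rw [isUnit_iff_ne_zero] at hPu ⊢
    exact fun h0 => hPu (by rw [h0, mul_zero])
  -- Part 2: f' descends to the coset space.
  · intro g h hg hh
    obtain ⟨hle', γ, v, δ, hγ, hδ, rfl⟩ := hh
    show ∃ h' : Matrix (Fin n) (Fin n) ℝ, memH' d h' ∧
      dualizePair d (g * reindex (eS n d hmn) (eS n d hmn)
        (fromBlocks (γ.map fun a => (a : ℝ)) v 0 (δ.map fun a => (a : ℝ))))
        = dualizePair d g * h'
    have hγ3 : γ⁻¹ * γ = 1 := nonsing_inv_mul _ hγ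
    have hδ3 : δ⁻¹ * δ = 1 := nonsing_inv_mul _ hδ
    have hγR : ((γ⁻¹).map fun a => (a : ℝ)) * (γ.map fun a => (a : ℝ)) = 1 :=
      map_mul_one _ _ hγ3
    have hδR : ((δ⁻¹).map fun a => (a : ℝ)) * (δ.map fun a => (a : ℝ)) = 1 :=
      map_mul_one _ _ hδ3
    have hεu : IsUnit ((δ⁻¹)ᵀ).det := by
      rw [det_transpose]
      exact isUnit_nonsing_inv_det _ hδ
    refine ⟨reindex (eS n d hmn) (eS n d hmn)
        (fromBlocks (γ.map fun a => (a : ℝ)) 0 0 (((δ⁻¹)ᵀ).map fun a => (a : ℝ))),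
      memH'_intro hmn γ 0 (δ⁻¹)ᵀ hγ hεu, ?_⟩
    rw [bridge hmn (g * reindex (eS n d hmn) (eS n d hmn)
        (fromBlocks (γ.map fun a => (a : ℝ)) v 0 (δ.map fun a => (a : ℝ)))),
      bridge hmn g]
    rw [reindex_mul (eS n d hmn).symm g _, reindex_cancel]
    rw [dp_mul_core _ _ ((γ⁻¹).map fun a => (a : ℝ)) _ ((δ⁻¹).map fun a => (a : ℝ))
      v hγR hδR]
    rw [reindex_mul]
    rw [Matrix.transpose_map]
  -- Part 3: f' is an involution modulo H'.
  · intro g hg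
    have hG : IsUnit (reindex (eS n d hmn).symm (eS n d hmn).symm g).det := by
      rwa [det_reindex_self]
    obtain ⟨W, hcore⟩ : ∃ W : Matrix (Fin d) (Fin (n - d)) ℝ,
        fromCols
          (toCols₁ (fromCols
            (toCols₁ (reindex (eS n d hmn).symm (eS n d hmn).symm g))
            (toCols₂ (((reindex (eS n d hmn).symm (eS n d hmn).symm g)ᵀ)⁻¹))))
          (toCols₂ (((fromCols
            (toCols₁ (reindex (eS n d hmn).symm (eS n d hmn).symm g))
            (toCols₂ (((reindex (eS n d hmn).symm (eS n d hmn).symm g)ᵀ)⁻¹)))ᵀ)⁻¹))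
        = reindex (eS n d hmn).symm (eS n d hmn).symm g * fromBlocks 1 W 0 1 :=
      ⟨_, dp_dp_core _ hG⟩
    refine ⟨reindex (eS n d hmn) (eS n d hmn) (fromBlocks 1 W 0 1), ?_, ?_⟩
    · have h1R : ((1 : Matrix (Fin d) (Fin d) ℤ).map fun a => (a : ℝ)) = 1 :=
        Matrix.map_one _ (by simp) (by simp)
      have h1R' : ((1 : Matrix (Fin (n - d)) (Fin (n - d)) ℤ).map fun a => (a : ℝ)) = 1 :=
        Matrix.map_one _ (by simp) (by simp)
      have hmem := memH'_intro hmn 1 W 1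
        (by rw [det_one]; exact isUnit_one) (by rw [det_one]; exact isUnit_one)
      rwa [h1R, h1R'] at hmem
    · rw [bridge hmn (dualizePair d g), bridge hmn g, reindex_cancel, hcore,
        reindex_mul, reindex_cancel']
  -- Part 4: on lattices, f' is (Λ, L) ↦ (Λ, L*).
  · intro g hg π hπ
    have hle : d ≤ n := by omega
    have hinl : ∀ j : Fin d, eS n d hmn (Sum.inl j) = Fin.castLE hle j := by
      intro j
      apply Fin.ext
      rw [coe_eS_inl]
      rfl
    have hinr : ∀ k : Fin (n - d),
        eS n d hmn (Sum.inr k) = (⟨d + (k : ℕ), by have := k.isLt; omega⟩ : Fin n) := by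
      intro k
      apply Fin.ext
      rw [coe_eS_inr]
    have hBfun : (fun j : Fin d => fun i : Fin n => firstColsR (show d ≤ n by omega) g i j)
        = colB hmn g := by
      funext j i
      show g i (Fin.castLE _ j) = g i (eS n d hmn (Sum.inl j))
      rw [hinl]
    have hDM : lastColsR (show d ≤ n by omega) (dualizePair d g)
        = Matrix.of fun i k => colD hmn g k i := by
      ext i k
      show dualizePair d g i ⟨d + (k : ℕ), by have := k.isLt; omega⟩ = colD hmn g k i
      simp only [dualizePair, Matrix.of_apply]
      rw [if_neg (show ¬ (d + (k : ℕ) < d) by omega)]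
      show (gᵀ)⁻¹ i ⟨d + (k : ℕ), by have := k.isLt; omega⟩
        = (gᵀ)⁻¹ i (eS n d hmn (Sum.inr k))
      rw [hinr]
    have hCfun : ∀ k : Fin (n - d),
        (fun i : Fin n => lastColsR (show d ≤ n by omega) g i k) = colC hmn g k := by
      intro k
      funext i
      show g i ⟨d + (k : ℕ), by have := k.isLt; omega⟩ = g i (eS n d hmn (Sum.inr k))
      rw [hinr]
    have hPM : (Matrix.of fun (i : Fin n) (j : Fin (n - d)) =>
          π (fun k : Fin n => lastColsR (show d ≤ n by omega) g k j) i)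
        = Matrix.of fun (i : Fin n) (k : Fin (n - d)) => π (colC hmn g k) i := by
      ext i k
      simp only [Matrix.of_apply]
      rw [show (fun k' : Fin n => lastColsR (show d ≤ n by omega) g k' k)
        = colC hmn g k from hCfun k]
    rw [hDM, hPM]
    refine part4 hmn g hg π ?_ ?_
    · intro x u hu
      have h1 := (hπ x).1
      rw [hBfun] at h1
      exact h1 u hu
    · intro x
      have h2 := (hπ x).2
      rw [hBfun] at h2
      exact h2
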